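/- Let G be a finite simple graph, let D and D′ be two distinct boundary cliques of G, and let D″ be a maximal clique of G with D″ ⊄ D ∪ D′. Then for any u ∈ D″ ∖ (D ∪ D′), any s ∈ Simp(D) and any s′ ∈ Simp(D′), the three vertices u, s, s′ are distinct and pairwise non-adjacent; consequently the induced subgraph of G on (D″ ∖ (D ∪ D′)) ∪ Simp(D) ∪ Simp(D′) has exactly three connected components. -/
import Mathlib


/-- A maximal clique of a graph (as a finite vertex set). -/
def IsMaxClique {V : Type*} (G : SimpleGraph V) (D : Finset V) : Prop :=
  G.IsClique ↑D ∧ ∀ E : Finset V, G.IsClique ↑E → D ⊆ E → D = E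

/-- A vertex is simplicial if its neighbourhood is a clique. -/
def IsSimplicialVertex {V : Type*} (G : SimpleGraph V) (v : V) : Prop :=
  G.IsClique (G.neighborSet v)

/-- `Simp(D)`: the set of simplicial vertices contained in `D`. -/
def SimpSet {V : Type*} (G : SimpleGraph V) (D : Finset V) : Set V :=
  {v | v ∈ D ∧ IsSimplicialVertex G v}

/-- A boundary clique: a maximal clique `D` with `Simp(D) ≠ ∅` such that
`Sep(D) = D ∖ Simp(D)` equals `D ∩ D'` for some other maximal clique `D'`. -/
def IsBoundaryClique {V : Type*} (G : SimpleGraph V) (D : Finset V) : Prop :=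
  IsMaxClique G D ∧ (SimpSet G D).Nonempty ∧
    ∃ D' : Finset V, IsMaxClique G D' ∧ D' ≠ D ∧
      ((↑D : Set V) \ SimpSet G D) = (↑D : Set V) ∩ ↑D'

/-- If `s` is a simplicial vertex of a maximal clique `D`, every neighbour of `s` is in `D`. -/
lemma simp_adj_mem {V : Type*} [DecidableEq V] {G : SimpleGraph V} {D : Finset V}
    (hD : IsMaxClique G D) {s : V} (hs : s ∈ D) (hsimp : IsSimplicialVertex G s)
    {v : V} (hadj : G.Adj s v) : v ∈ D := by
  have hclique : G.IsClique ↑(insert v D) := by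
    intro a ha b hb hab
    simp only [Finset.coe_insert, Set.mem_insert_iff, Finset.mem_coe] at ha hb
    rcases ha with rfl | ha
    · rcases hb with rfl | hb
      · exact absurd rfl hab
      · by_cases hbs : b = s
        · subst hbs; exact hadj.symm
        · exact hsimp (by exact hadj : a ∈ G.neighborSet s)
            (hD.1 hs (by exact_mod_cast hb) (Ne.symm hbs) : b ∈ G.neighborSet s) hab
    · rcases hb with rfl | hb
      · by_cases has : a = s
        · subst has; exact hadj
        · exact hsimp (hD.1 hs (by exact_mod_cast ha) (Ne.symm has) : a ∈ G.neighborSet s)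
            (by exact hadj : b ∈ G.neighborSet s) hab
      · exact hD.1 (by exact_mod_cast ha) (by exact_mod_cast hb) hab
  have := hD.2 (insert v D) hclique (Finset.subset_insert _ _)
  rw [this]; exact Finset.mem_insert_self _ _

/-- A simplicial vertex of a maximal clique `D` belongs to no other maximal clique. -/
lemma simp_unique {V : Type*} [DecidableEq V] {G : SimpleGraph V} {D : Finset V}
    (hD : IsMaxClique G D) {s : V} (hs : s ∈ D) (hsimp : IsSimplicialVertex G s)
    {E : Finset V} (hE : IsMaxClique G E) (hsE : s ∈ E) : E = D := by
  have hsub : E ⊆ D := by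
    intro e he
    by_cases h : e = s
    · subst h; exact hs
    · exact simp_adj_mem hD hs hsimp
        (hE.1 (Finset.mem_coe.mpr hsE) (Finset.mem_coe.mpr he) (Ne.symm h))
  exact hE.2 D hD.1 hsub

open Classical in
/-- Classification map into three pieces. -/
noncomputable def pieceFun {V : Type*} (A B : Set V) (S : Set V) (x : ↥S) : Fin 3 :=
  if (x : V) ∈ A then 0 else if (x : V) ∈ B then 1 else 2

lemma pieceFun_A {V : Type*} {A B S : Set V} {x : ↥S} (h : (x : V) ∈ A) :
    pieceFun A B S x = 0 := by simp [pieceFun, h]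

lemma pieceFun_B {V : Type*} {A B S : Set V} {x : ↥S} (hA : (x : V) ∉ A) (hB : (x : V) ∈ B) :
    pieceFun A B S x = 1 := by simp [pieceFun, hA, hB]

lemma pieceFun_C {V : Type*} {A B S : Set V} {x : ↥S} (hA : (x : V) ∉ A) (hB : (x : V) ∉ B) :
    pieceFun A B S x = 2 := by simp [pieceFun, hA, hB]

set_option maxHeartbeats 1600000 in
/-- if `D ≠ D'` are boundary cliques and `D''` is a maximal clique not
contained in `D ∪ D'`, then any `u ∈ D'' ∖ (D ∪ D')`, `s ∈ Simp(D)`, `s' ∈ Simp(D')` are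
distinct and pairwise non-adjacent, and the induced subgraph on
`(D'' ∖ (D ∪ D')) ∪ Simp(D) ∪ Simp(D')` has exactly three connected components. -/
theorem statement16 {V : Type*} [Fintype V] [DecidableEq V] (G : SimpleGraph V)
    (D D' D'' : Finset V) (hne : D ≠ D')
    (hD : IsBoundaryClique G D) (hD' : IsBoundaryClique G D')
    (hD'' : IsMaxClique G D'') (hns : ¬ D'' ⊆ D ∪ D') :
    (∀ u ∈ (↑D'' : Set V) \ (↑D ∪ ↑D'), ∀ s ∈ SimpSet G D, ∀ s' ∈ SimpSet G D',
      u ≠ s ∧ u ≠ s' ∧ s ≠ s' ∧ ¬ G.Adj u s ∧ ¬ G.Adj u s' ∧ ¬ G.Adj s s') ∧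
    Nat.card
      (G.induce (((↑D'' : Set V) \ (↑D ∪ ↑D') ∪ SimpSet G D) ∪ SimpSet G D')).ConnectedComponent
        = 3 := by
  classical
  obtain ⟨hDmax, hDsimp, -⟩ := hD
  obtain ⟨hD'max, hD'simp, -⟩ := hD'
  -- a simplicial vertex of D' is not in D, and vice versa
  have hDD' : ∀ s' ∈ SimpSet G D', s' ∉ (↑D : Set V) := by
    intro s' hs' hmem
    exact hne (simp_unique hD'max hs'.1 hs'.2 hDmax (Finset.mem_coe.mp hmem))
  have hD'D : ∀ s ∈ SimpSet G D, s ∉ (↑D' : Set V) := by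
    intro s hs hmem
    exact hne ((simp_unique hDmax hs.1 hs.2 hD'max (Finset.mem_coe.mp hmem)).symm)
  set A : Set V := (↑D'' : Set V) \ (↑D ∪ ↑D') with hAdef
  -- non-adjacency facts
  have noAB : ∀ u ∈ A, ∀ s ∈ SimpSet G D, ¬ G.Adj u s := by
    intro u hu s hs h
    exact hu.2 (Or.inl (Finset.mem_coe.mpr (simp_adj_mem hDmax hs.1 hs.2 h.symm)))
  have noAC : ∀ u ∈ A, ∀ s' ∈ SimpSet G D', ¬ G.Adj u s' := by
    intro u hu s' hs' h
    exact hu.2 (Or.inr (Finset.mem_coe.mpr (simp_adj_mem hD'max hs'.1 hs'.2 h.symm)))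
  have noBC : ∀ s ∈ SimpSet G D, ∀ s' ∈ SimpSet G D', ¬ G.Adj s s' := by
    intro s hs s' hs' h
    exact hDD' s' hs' (Finset.mem_coe.mpr (simp_adj_mem hDmax hs.1 hs.2 h))
  have key : ∀ u ∈ A, ∀ s ∈ SimpSet G D, ∀ s' ∈ SimpSet G D',
      u ≠ s ∧ u ≠ s' ∧ s ≠ s' ∧ ¬ G.Adj u s ∧ ¬ G.Adj u s' ∧ ¬ G.Adj s s' := by
    intro u hu s hs s' hs'
    refine ⟨?_, ?_, ?_, noAB u hu s hs, noAC u hu s' hs', noBC s hs s' hs'⟩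
    · rintro rfl; exact hu.2 (Or.inl (Finset.mem_coe.mpr hs.1))
    · rintro rfl; exact hu.2 (Or.inr (Finset.mem_coe.mpr hs'.1))
    · rintro rfl; exact hD'D s hs (Finset.mem_coe.mpr hs'.1)
  refine ⟨key, ?_⟩
  set S : Set V := (A ∪ SimpSet G D) ∪ SimpSet G D' with hSdef
  -- disjointness
  have hBA : ∀ x, x ∈ SimpSet G D → x ∉ A := fun x hx h => h.2 (Or.inl (Finset.mem_coe.mpr hx.1))
  have hCA : ∀ x, x ∈ SimpSet G D' → x ∉ A := fun x hx h => h.2 (Or.inr (Finset.mem_coe.mpr hx.1))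
  have hCB : ∀ x, x ∈ SimpSet G D' → x ∉ SimpSet G D := fun x hx hxB =>
    hDD' x hx (Finset.mem_coe.mpr hxB.1)
  set g : ↥S → Fin 3 := pieceFun A (SimpSet G D) S with hgdef
  have hpiece : ∀ z : ↥S, ((z : V) ∈ A ∧ g z = 0) ∨ ((z : V) ∈ SimpSet G D ∧ g z = 1) ∨
      ((z : V) ∈ SimpSet G D' ∧ g z = 2) := by
    intro z
    rcases z.2 with (h | h) | h
    · exact Or.inl ⟨h, pieceFun_A h⟩
    · exact Or.inr (Or.inl ⟨h, pieceFun_B (hBA _ h) h⟩)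
    · exact Or.inr (Or.inr ⟨h, pieceFun_C (hCA _ h) (hCB _ h)⟩)
  have hconst : ∀ x y : ↥S, (G.induce S).Adj x y → g x = g y := by
    intro x y hxy
    have hadj : G.Adj (x : V) (y : V) := hxy
    rcases hpiece x with ⟨hx, ex⟩ | ⟨hx, ex⟩ | ⟨hx, ex⟩ <;>
      rcases hpiece y with ⟨hy, ey⟩ | ⟨hy, ey⟩ | ⟨hy, ey⟩
    · rw [ex, ey]
    · exact absurd hadj (noAB _ hx _ hy)
    · exact absurd hadj (noAC _ hx _ hy)
    · exact absurd hadj.symm (noAB _ hy _ hx)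
    · rw [ex, ey]
    · exact absurd hadj (noBC _ hx _ hy)
    · exact absurd hadj.symm (noAC _ hy _ hx)
    · exact absurd hadj.symm (noBC _ hy _ hx)
    · rw [ex, ey]
  have hwalk : ∀ (v w : ↥S) (p : (G.induce S).Walk v w), g v = g w := by
    intro v w p
    induction p with
    | nil => rfl
    | cons h _ ih => exact (hconst _ _ h).trans ih
  let φ : (G.induce S).ConnectedComponent → Fin 3 :=
    SimpleGraph.ConnectedComponent.lift g (fun v w p _ => hwalk v w p)
  have hφmk : ∀ v : ↥S, φ ((G.induce S).connectedComponentMk v) = g v := fun _ => rfl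
  -- reachability within a piece
  have reach : ∀ x y : ↥S, ((x : V) = (y : V) ∨ G.Adj (x : V) (y : V)) →
      (G.induce S).Reachable x y := by
    intro x y h
    rcases h with h | h
    · rw [Subtype.ext h]
    · exact (SimpleGraph.Adj.reachable (by exact h : (G.induce S).Adj x y))
  have hinj : Function.Injective φ := by
    intro c1 c2
    refine SimpleGraph.ConnectedComponent.ind₂ (fun x y h => ?_) c1 c2
    have h' : g x = g y := h
    rw [SimpleGraph.ConnectedComponent.eq]
    rcases hpiece x with ⟨hx, ex⟩ | ⟨hx, ex⟩ | ⟨hx, ex⟩ <;>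
      rcases hpiece y with ⟨hy, ey⟩ | ⟨hy, ey⟩ | ⟨hy, ey⟩
    · refine reach x y ?_
      by_cases hxy : (x : V) = (y : V)
      · exact Or.inl hxy
      · exact Or.inr (hD''.1 hx.1 hy.1 hxy)
    · rw [ex, ey] at h'; exact absurd h' (by decide)
    · rw [ex, ey] at h'; exact absurd h' (by decide)
    · rw [ex, ey] at h'; exact absurd h' (by decide)
    · refine reach x y ?_
      by_cases hxy : (x : V) = (y : V)
      · exact Or.inl hxy
      · exact Or.inr (hDmax.1 (Finset.mem_coe.mpr hx.1) (Finset.mem_coe.mpr hy.1) hxy)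
    · rw [ex, ey] at h'; exact absurd h' (by decide)
    · rw [ex, ey] at h'; exact absurd h' (by decide)
    · rw [ex, ey] at h'; exact absurd h' (by decide)
    · refine reach x y ?_
      by_cases hxy : (x : V) = (y : V)
      · exact Or.inl hxy
      · exact Or.inr (hD'max.1 (Finset.mem_coe.mpr hx.1) (Finset.mem_coe.mpr hy.1) hxy)
  have hsurj : Function.Surjective φ := by
    intro i
    obtain ⟨u, huD'', hu⟩ := Finset.not_subset.mp hns
    have huA : u ∈ A := by
      refine ⟨Finset.mem_coe.mpr huD'', fun h => hu ?_⟩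
      rcases h with h | h
      · exact Finset.mem_union_left _ (Finset.mem_coe.mp h)
      · exact Finset.mem_union_right _ (Finset.mem_coe.mp h)
    obtain ⟨s, hs⟩ := hDsimp
    obtain ⟨s', hs'⟩ := hD'simp
    fin_cases i
    · exact ⟨(G.induce S).connectedComponentMk ⟨u, Or.inl (Or.inl huA)⟩,
        by rw [hφmk]; exact pieceFun_A huA⟩
    · exact ⟨(G.induce S).connectedComponentMk ⟨s, Or.inl (Or.inr hs)⟩,
        by rw [hφmk]; exact pieceFun_B (hBA _ hs) hs⟩
    · exact ⟨(G.induce S).connectedComponentMk ⟨s', Or.inr hs'⟩,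
        by rw [hφmk]; exact pieceFun_C (hCA _ hs') (hCB _ hs')⟩
  have := Nat.card_eq_of_bijective φ ⟨hinj, hsurj⟩
  simpa using this
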